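/- arXiv:1603.06216 — 2 statements merged into one kernel-verified Lean document; each statement's English description precedes it below -/
import Mathlib

section
/- Let p and q be probability measures on a measurable space with p absolutely continuous with respect to q, and let A be a measurable set with p(A) = 1 and q(A) > 0. Then the Kullback--Leibler divergence of p from the normalized restriction of q to A satisfies D_KL(p ‖ (q(A))⁻¹ • q|_A) = D_KL(p ‖ q) + log q(A), provided D_KL(p ‖ q) is finite. -/
open MeasureTheory

/-- Kullback--Leibler divergence `D_KL(p ‖ q) = ∫ log (dp/dq) dp`. -/
noncomputable def klDiv {Ω : Type*} [MeasurableSpace Ω] (p q : Measure Ω) : ℝ :=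
  ∫ x, Real.log ((p.rnDeriv q) x).toReal ∂p

theorem stmt0 {Ω : Type*} [MeasurableSpace Ω] (p q : Measure Ω)
    [IsProbabilityMeasure p] [IsProbabilityMeasure q]
    (hpq : p ≪ q) (A : Set Ω) (hA : MeasurableSet A)
    (hpA : p A = 1) (hqA : 0 < q A)
    (hfin : Integrable (fun x => Real.log ((p.rnDeriv q) x).toReal) p) :
    klDiv p ((q A)⁻¹ • q.restrict A) = klDiv p q + Real.log (q A).toReal := by
  have hqA_ne_top : q A ≠ ⊤ := (measure_lt_top q A).ne
  have hqA_ne : q A ≠ 0 := hqA.ne'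
  have hpAc : p Aᶜ = 0 := by
    rw [measure_compl hA (measure_ne_top p A), hpA, measure_univ, tsub_self]
  have hpmem : ∀ᵐ x ∂p, x ∈ A := by
    rw [MeasureTheory.ae_iff]
    exact hpAc
  -- p is absolutely continuous w.r.t. q.restrict A
  have hpqA : p ≪ q.restrict A := by
    intro S hS
    rw [Measure.restrict_apply₀' hA.nullMeasurableSet] at hS
    have h1 : p (S ∩ A) = 0 := hpq hS
    have h2 : p (S \ A) = 0 := measure_mono_null (Set.diff_subset_compl S A) hpAc
    refine le_antisymm ?_ zero_le
    calc p S ≤ p (S ∩ A) + p (S \ A) := measure_le_inter_add_diff p S A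
    _ = 0 := by rw [h1, h2, add_zero]
  -- p.rnDeriv (q.restrict A) = p.rnDeriv q a.e. q.restrict A
  have hrest : p.rnDeriv q =ᵐ[q.restrict A] p.rnDeriv (q.restrict A) := by
    refine Measure.eq_rnDeriv (s := 0) (Measure.measurable_rnDeriv p q)
      (Measure.MutuallySingular.zero_left) ?_
    rw [zero_add, ← restrict_withDensity hA, Measure.withDensity_rnDeriv_eq p q hpq,
      Measure.restrict_eq_self_of_ae_mem hpmem]
  -- rnDeriv w.r.t. the scaled measure
  have hsmul : p.rnDeriv ((q A)⁻¹ • q.restrict A) =ᵐ[q.restrict A]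
      ((q A)⁻¹)⁻¹ • p.rnDeriv (q.restrict A) :=
    Measure.rnDeriv_smul_right_of_ne_top p (q.restrict A)
      (ENNReal.inv_ne_zero.2 hqA_ne_top) (ENNReal.inv_ne_top.2 hqA_ne)
  have key : ∀ᵐ x ∂p, p.rnDeriv ((q A)⁻¹ • q.restrict A) x = q A * p.rnDeriv q x := by
    filter_upwards [hpqA.ae_le hsmul, hpqA.ae_le hrest] with x h1 h2
    rw [h1, Pi.smul_apply, ← h2, inv_inv, smul_eq_mul]
  have hpos : ∀ᵐ x ∂p, 0 < p.rnDeriv q x := Measure.rnDeriv_pos hpq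
  have hlt : ∀ᵐ x ∂p, p.rnDeriv q x < ⊤ := hpq.ae_le (Measure.rnDeriv_lt_top p q)
  have heq : ∀ᵐ x ∂p, Real.log (p.rnDeriv ((q A)⁻¹ • q.restrict A) x).toReal
      = Real.log (q A).toReal + Real.log (p.rnDeriv q x).toReal := by
    filter_upwards [key, hpos, hlt] with x hk hp hl
    rw [hk, ENNReal.toReal_mul, Real.log_mul (ENNReal.toReal_pos hqA_ne hqA_ne_top).ne'
      (by simp [ENNReal.toReal_pos hp.ne' hl.ne, (ENNReal.toReal_pos hp.ne' hl.ne).ne'])]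
  rw [klDiv, integral_congr_ae heq, integral_add (integrable_const _) hfin,
    integral_const, probReal_univ, one_smul, klDiv]
  exact add_comm _ _
end

section
/- With φ the standard normal PDF and Φ the standard normal CDF, and ε(ξ) = φ(ξ)/Φ(ξ), one has lim_{ξ → −∞} (ξ·ε(ξ) + ε(ξ)²) = 1. -/
open MeasureTheory Filter Set

noncomputable def stdNormalPDF (t : ℝ) : ℝ :=
  (Real.sqrt (2 * Real.pi))⁻¹ * Real.exp (-t ^ 2 / 2)

noncomputable def stdNormalCDF (t : ℝ) : ℝ :=
  ∫ s in Set.Iic t, stdNormalPDF s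

lemma phi_pos (t : ℝ) : 0 < stdNormalPDF t := by
  unfold stdNormalPDF
  positivity

lemma phi_cont : Continuous stdNormalPDF := by
  unfold stdNormalPDF
  fun_prop

lemma phi_integrable : Integrable stdNormalPDF := by
  have : Integrable (fun t : ℝ => Real.exp (-(1/2) * t ^ 2)) := integrable_exp_neg_mul_sq (by norm_num)
  have h := this.const_mul (Real.sqrt (2 * Real.pi))⁻¹
  refine h.congr (Filter.Eventually.of_forall fun t => ?_)
  unfold stdNormalPDF
  ring_nf

lemma hasDerivAt_phi (s : ℝ) : HasDerivAt stdNormalPDF (-s * stdNormalPDF s) s := by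
  unfold stdNormalPDF
  have h1 : HasDerivAt (fun t : ℝ => -t ^ 2 / 2) (-s) s := by
    have h := ((hasDerivAt_pow 2 s).neg).div_const 2
    refine h.congr_deriv ?_
    push_cast
    ring
  have h2 := (h1.exp).const_mul (Real.sqrt (2 * Real.pi))⁻¹
  exact h2.congr_deriv (by ring)

lemma phi_tendsto_atBot : Tendsto stdNormalPDF atBot (nhds 0) := by
  have hsq : Tendsto (fun s : ℝ => s ^ 2) atBot atTop := by
    have h : Tendsto (fun s : ℝ => (-s) ^ 2) atBot atTop :=
      (tendsto_pow_atTop (n := 2) two_ne_zero).comp tendsto_neg_atBot_atTop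
    refine h.congr fun s => ?_
    ring
  have h1 : Tendsto (fun s : ℝ => -s ^ 2 / 2) atBot atBot :=
    (tendsto_neg_atTop_atBot.comp hsq).atBot_div_const (by norm_num)
  have h2 : Tendsto (fun s : ℝ => Real.exp (-s ^ 2 / 2)) atBot (nhds 0) :=
    Real.tendsto_exp_atBot.comp h1
  have h3 := h2.const_mul (Real.sqrt (2 * Real.pi))⁻¹
  rw [mul_zero] at h3
  exact h3.congr fun s => rfl

lemma pow_bound {s ξ : ℝ} (hξ : ξ < 0) (hs : s ≤ ξ) (n : ℕ) : ξ ^ (2*n) ≤ s ^ (2*n) := by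
  rw [pow_mul, pow_mul]
  have h1 : ξ ^ 2 ≤ s ^ 2 := by nlinarith
  exact pow_le_pow_left₀ (by positivity) h1 n

lemma inv_tendsto_atBot_zero' : Tendsto (fun s : ℝ => s⁻¹) atBot (nhds 0) := by
  have h : Tendsto (fun s : ℝ => -(-s)⁻¹) atBot (nhds (-0)) :=
    ((tendsto_neg_atBot_atTop : Tendsto (fun s : ℝ => -s) atBot atTop).inv_tendsto_atTop).neg
  rw [neg_zero] at h
  exact h.congr fun s => by rw [inv_neg, neg_neg]

lemma le_cdf {ξ : ℝ} (hξ : ξ < 0) :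
    -stdNormalPDF ξ * (ξ⁻¹ - (ξ⁻¹) ^ 3) ≤ stdNormalCDF ξ := by
  set g : ℝ → ℝ := fun s => -(stdNormalPDF s * (s⁻¹ - (s⁻¹) ^ 3)) with hg
  set g' : ℝ → ℝ := fun s => stdNormalPDF s * (1 - 3 * (s ^ 4)⁻¹) with hg'
  have hderiv : ∀ s ∈ Set.Iic ξ, HasDerivAt g (g' s) s := by
    intro s hs
    have hs0 : s ≠ 0 := by simp only [Set.mem_Iic] at hs; exact ne_of_lt (lt_of_le_of_lt hs hξ)
    have hp : HasDerivAt (fun t : ℝ => t⁻¹ - (t⁻¹) ^ 3)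
        (-(s ^ 2)⁻¹ - (3 : ℕ) * (s⁻¹) ^ 2 * (-(s ^ 2)⁻¹)) s :=
      (hasDerivAt_inv hs0).sub ((hasDerivAt_inv hs0).pow 3)
    have h := ((hasDerivAt_phi s).mul hp).neg
    refine h.congr_deriv ?_
    have hphi := phi_pos s
    have h2 : s ^ 2 ≠ 0 := pow_ne_zero 2 hs0
    have h4 : s ^ 4 ≠ 0 := pow_ne_zero 4 hs0
    simp only [inv_pow]
    field_simp
    ring_nf
    simp only [hg']
    field_simp
    ring
  have hint : IntegrableOn g' (Set.Iic ξ) := by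
    have hmeas : AEStronglyMeasurable g' (volume.restrict (Set.Iic ξ)) := by
      apply Measurable.aestronglyMeasurable
      exact (phi_cont.measurable).mul (measurable_const.sub (((measurable_id.pow_const 4).inv).const_mul 3))
    refine Integrable.mono' ((phi_integrable.const_mul (1 + 3 * (ξ ^ 4)⁻¹)).restrict) hmeas ?_
    filter_upwards [MeasureTheory.ae_restrict_mem measurableSet_Iic] with s hs
    simp only [Set.mem_Iic] at hs
    have h4 : ξ ^ 4 ≤ s ^ 4 := by have := pow_bound hξ hs 2; norm_num at this ⊢; linarith
    have hξ0 : ξ ≠ 0 := ne_of_lt hξ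
    have hs0 : s ≠ 0 := ne_of_lt (lt_of_le_of_lt hs hξ)
    have hx4 : (0:ℝ) < ξ ^ 4 := by positivity
    have hs4 : (0:ℝ) < s ^ 4 := by positivity
    have hb : 3 * (s ^ 4)⁻¹ ≤ 3 * (ξ ^ 4)⁻¹ := by
      gcongr
    have hb0 : (0:ℝ) ≤ 3 * (s ^ 4)⁻¹ := by positivity
    have hphi := (phi_pos s).le
    rw [Real.norm_eq_abs, abs_mul, abs_of_nonneg hphi]
    calc stdNormalPDF s * |1 - 3 * (s ^ 4)⁻¹| ≤ stdNormalPDF s * (1 + 3 * (ξ ^ 4)⁻¹) := by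
          apply mul_le_mul_of_nonneg_left _ hphi
          rw [abs_le]
          constructor <;> nlinarith
      _ = (1 + 3 * (ξ ^ 4)⁻¹) * stdNormalPDF s := by ring
  have htends : Tendsto g atBot (nhds 0) := by
    have hp : Tendsto (fun s : ℝ => s⁻¹ - (s⁻¹) ^ 3) atBot (nhds ((0:ℝ) - 0 ^ 3)) :=
      inv_tendsto_atBot_zero'.sub (inv_tendsto_atBot_zero'.pow 3)
    convert (phi_tendsto_atBot.mul hp).neg using 2
    norm_num
  have heq : ∫ s in Set.Iic ξ, g' s = g ξ - 0 :=
    MeasureTheory.integral_Iic_of_hasDerivAt_of_tendsto' hderiv hint htends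
  have hle : ∫ s in Set.Iic ξ, g' s ≤ ∫ s in Set.Iic ξ, stdNormalPDF s := by
    apply MeasureTheory.setIntegral_mono_on hint (phi_integrable.restrict) measurableSet_Iic
    intro s hs
    simp only [Set.mem_Iic] at hs
    have hb : (0:ℝ) ≤ 3 * (s ^ 4)⁻¹ := by positivity
    have := mul_nonneg (phi_pos s).le hb
    simp only [hg']
    nlinarith
  have : g ξ ≤ stdNormalCDF ξ := by
    rw [sub_zero] at heq
    rw [← heq]
    exact hle
  simpa [hg, neg_mul] using this

lemma cdf_le {ξ : ℝ} (hξ : ξ < 0) :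
    stdNormalCDF ξ ≤ -stdNormalPDF ξ * (ξ⁻¹ - (ξ⁻¹) ^ 3 + 3 * (ξ⁻¹) ^ 5) := by
  set g : ℝ → ℝ := fun s => -(stdNormalPDF s * (s⁻¹ - (s⁻¹) ^ 3 + 3 * (s⁻¹) ^ 5)) with hg
  set g' : ℝ → ℝ := fun s => stdNormalPDF s * (1 + 15 * (s ^ 6)⁻¹) with hg'
  have hderiv : ∀ s ∈ Set.Iic ξ, HasDerivAt g (g' s) s := by
    intro s hs
    have hs0 : s ≠ 0 := by simp only [Set.mem_Iic] at hs; exact ne_of_lt (lt_of_le_of_lt hs hξ)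
    have hp : HasDerivAt (fun t : ℝ => t⁻¹ - (t⁻¹) ^ 3 + 3 * (t⁻¹) ^ 5)
        (-(s ^ 2)⁻¹ - (3 : ℕ) * (s⁻¹) ^ 2 * (-(s ^ 2)⁻¹) + 3 * ((5 : ℕ) * (s⁻¹) ^ 4 * (-(s ^ 2)⁻¹))) s :=
      ((hasDerivAt_inv hs0).sub ((hasDerivAt_inv hs0).pow 3)).add
        (((hasDerivAt_inv hs0).pow 5).const_mul 3)
    have h := ((hasDerivAt_phi s).mul hp).neg
    refine h.congr_deriv ?_
    have h2 : s ^ 2 ≠ 0 := pow_ne_zero 2 hs0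
    have h6 : s ^ 6 ≠ 0 := pow_ne_zero 6 hs0
    simp only [inv_pow]
    field_simp
    ring_nf
    simp only [hg']
    field_simp
    ring
  have hint : IntegrableOn g' (Set.Iic ξ) := by
    have hmeas : AEStronglyMeasurable g' (volume.restrict (Set.Iic ξ)) := by
      apply Measurable.aestronglyMeasurable
      exact (phi_cont.measurable).mul (measurable_const.add (((measurable_id.pow_const 6).inv).const_mul 15))
    refine Integrable.mono' ((phi_integrable.const_mul (1 + 15 * (ξ ^ 6)⁻¹)).restrict) hmeas ?_
    filter_upwards [MeasureTheory.ae_restrict_mem measurableSet_Iic] with s hs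
    simp only [Set.mem_Iic] at hs
    have h6 : ξ ^ 6 ≤ s ^ 6 := by have := pow_bound hξ hs 3; norm_num at this ⊢; linarith
    have hξ0 : ξ ≠ 0 := ne_of_lt hξ
    have hs0 : s ≠ 0 := ne_of_lt (lt_of_le_of_lt hs hξ)
    have hx6 : (0:ℝ) < ξ ^ 6 := by positivity
    have hs6 : (0:ℝ) < s ^ 6 := by positivity
    have hb : 15 * (s ^ 6)⁻¹ ≤ 15 * (ξ ^ 6)⁻¹ := by gcongr
    have hb0 : (0:ℝ) ≤ 15 * (s ^ 6)⁻¹ := by positivity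
    have hphi := (phi_pos s).le
    rw [Real.norm_eq_abs, abs_mul, abs_of_nonneg hphi, abs_of_nonneg (by linarith : (0:ℝ) ≤ 1 + 15 * (s ^ 6)⁻¹)]
    calc stdNormalPDF s * (1 + 15 * (s ^ 6)⁻¹) ≤ stdNormalPDF s * (1 + 15 * (ξ ^ 6)⁻¹) := by
          apply mul_le_mul_of_nonneg_left _ hphi; linarith
      _ = (1 + 15 * (ξ ^ 6)⁻¹) * stdNormalPDF s := by ring
  have htends : Tendsto g atBot (nhds 0) := by
    have hp : Tendsto (fun s : ℝ => s⁻¹ - (s⁻¹) ^ 3 + 3 * (s⁻¹) ^ 5) atBot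
        (nhds ((0:ℝ) - 0 ^ 3 + 3 * 0 ^ 5)) :=
      (inv_tendsto_atBot_zero'.sub (inv_tendsto_atBot_zero'.pow 3)).add
        ((inv_tendsto_atBot_zero'.pow 5).const_mul 3)
    convert (phi_tendsto_atBot.mul hp).neg using 2
    norm_num
  have heq : ∫ s in Set.Iic ξ, g' s = g ξ - 0 :=
    MeasureTheory.integral_Iic_of_hasDerivAt_of_tendsto' hderiv hint htends
  have hle : ∫ s in Set.Iic ξ, stdNormalPDF s ≤ ∫ s in Set.Iic ξ, g' s := by
    apply MeasureTheory.setIntegral_mono_on (phi_integrable.restrict) hint measurableSet_Iic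
    intro s hs
    simp only [Set.mem_Iic] at hs
    have hb : (0:ℝ) ≤ 15 * (s ^ 6)⁻¹ := by positivity
    have := mul_nonneg (phi_pos s).le hb
    simp only [hg']
    nlinarith
  have : stdNormalCDF ξ ≤ g ξ := by
    rw [sub_zero] at heq
    rw [← heq]
    exact hle
  simpa [hg, neg_mul] using this

set_option maxHeartbeats 2000000 in
theorem stmt9 :
    Tendsto (fun ξ : ℝ => ξ * (stdNormalPDF ξ / stdNormalCDF ξ) + (stdNormalPDF ξ / stdNormalCDF ξ) ^ 2) atBot (nhds 1) := by
  -- the upper squeeze function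
  have hHi : Tendsto (fun ξ : ℝ => ((((ξ⁻¹) ^ 2 - 1)⁻¹) ^ 2 : ℝ)) atBot (nhds 1) := by
    have hc : ContinuousAt (fun t : ℝ => (((t ^ 2 - 1)⁻¹) ^ 2 : ℝ)) 0 := by
      have h0 : ((0:ℝ) ^ 2 - 1) ≠ 0 := by norm_num
      exact ((((continuousAt_id.pow 2).sub continuousAt_const).inv₀ h0).pow 2)
    have h := hc.tendsto.comp inv_tendsto_atBot_zero'
    have heq : (fun ξ : ℝ => ((((ξ⁻¹) ^ 2 - 1)⁻¹) ^ 2 : ℝ)) =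
        (fun t : ℝ => (((t ^ 2 - 1)⁻¹) ^ 2 : ℝ)) ∘ (fun s : ℝ => s⁻¹) := rfl
    rw [heq]
    convert h using 2
    norm_num
  -- the lower squeeze function
  have hLo : Tendsto (fun ξ : ℝ => ((1 - 3 * (ξ⁻¹) ^ 2) * (((1 - (ξ⁻¹) ^ 2 + 3 * (ξ⁻¹) ^ 4)⁻¹) ^ 2) : ℝ)) atBot (nhds 1) := by
    have hc : ContinuousAt (fun t : ℝ => ((1 - 3 * t ^ 2) * (((1 - t ^ 2 + 3 * t ^ 4)⁻¹) ^ 2) : ℝ)) 0 := by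
      have h0 : ((1:ℝ) - 0 ^ 2 + 3 * 0 ^ 4) ≠ 0 := by norm_num
      exact (continuousAt_const.sub (continuousAt_const.mul (continuousAt_id.pow 2))).mul
        ((((continuousAt_const.sub (continuousAt_id.pow 2)).add
          (continuousAt_const.mul (continuousAt_id.pow 4))).inv₀ h0).pow 2)
    have h := hc.tendsto.comp inv_tendsto_atBot_zero'
    have heq : (fun ξ : ℝ => ((1 - 3 * (ξ⁻¹) ^ 2) * (((1 - (ξ⁻¹) ^ 2 + 3 * (ξ⁻¹) ^ 4)⁻¹) ^ 2) : ℝ)) =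
        (fun t : ℝ => ((1 - 3 * t ^ 2) * (((1 - t ^ 2 + 3 * t ^ 4)⁻¹) ^ 2) : ℝ)) ∘ (fun s : ℝ => s⁻¹) := rfl
    rw [heq]
    convert h using 2
    norm_num
  refine tendsto_of_tendsto_of_tendsto_of_le_of_le' hLo hHi ?_ ?_
  · -- lower bound eventually
    filter_upwards [eventually_le_atBot (-2 : ℝ)] with ξ hξ2
    have hξ : ξ < 0 := lt_of_le_of_lt hξ2 (by norm_num)
    have hξ0 : ξ ≠ 0 := ne_of_lt hξ
    set t : ℝ := ξ⁻¹ with ht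
    have hξt : ξ * t = 1 := mul_inv_cancel₀ hξ0
    have ht0 : t < 0 := inv_neg''.mpr hξ
    have htge : -(1/2 : ℝ) ≤ t := by nlinarith
    have htsq : t ^ 2 ≤ 1/4 := by nlinarith
    set A : ℝ := -(t - t ^ 3) with hA
    set B : ℝ := -(t - t ^ 3 + 3 * t ^ 5) with hB
    have hApos : 0 < A := by nlinarith
    have hBpos : 0 < B := by nlinarith
    have hp := phi_pos ξ
    have hCl : stdNormalPDF ξ * A ≤ stdNormalCDF ξ := by
      have := le_cdf hξ; rw [hA]; nlinarith
    have hCu : stdNormalCDF ξ ≤ stdNormalPDF ξ * B := by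
      have := cdf_le hξ; rw [hB]; nlinarith
    have hCpos : 0 < stdNormalCDF ξ := lt_of_lt_of_le (by positivity) hCl
    set e : ℝ := stdNormalPDF ξ / stdNormalCDF ξ with he
    have hepos : 0 < e := div_pos hp hCpos
    have helb : 1 / B ≤ e := by
      rw [he, div_le_div_iff₀ hBpos hCpos]; nlinarith
    have heub : e ≤ 1 / A := by
      rw [he, div_le_div_iff₀ hCpos hApos]; nlinarith
    have hBineq : 0 ≤ 1 / B + ξ := by
      have hB0 : B ≠ 0 := ne_of_gt hBpos
      have h1 : 1 + ξ * B = t ^ 2 - 3 * t ^ 4 := by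
        rw [hB]; linear_combination (-(1 - t ^ 2 + 3 * t ^ 4)) * hξt
      have h2 : 0 ≤ t ^ 2 - 3 * t ^ 4 := by nlinarith
      have : 1 / B + ξ = (1 + ξ * B) / B := by
        rw [add_div, mul_div_assoc, div_self hB0, mul_one]
      rw [this, h1]; positivity
    have hexi : 0 ≤ e + ξ := by linarith [helb]
    have key : (1 / B) * (1 / B + ξ) ≤ e * (e + ξ) := by
      apply mul_le_mul helb (by linarith) hBineq hepos.le
    have heqLo : (1 - 3 * t ^ 2) * (((1 - t ^ 2 + 3 * t ^ 4)⁻¹) ^ 2) = (1 / B) * (1 / B + ξ) := by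
      have hden : (1 : ℝ) - t ^ 2 + 3 * t ^ 4 ≠ 0 := by nlinarith
      have hB0 : B ≠ 0 := ne_of_gt hBpos
      have h1 : 1 + ξ * B = t ^ 2 - 3 * t ^ 4 := by
        rw [hB]; linear_combination (-(1 - t ^ 2 + 3 * t ^ 4)) * hξt
      have hBsq : B ^ 2 = t ^ 2 * (1 - t ^ 2 + 3 * t ^ 4) ^ 2 := by rw [hB]; ring
      have ht0' : t ≠ 0 := ne_of_lt ht0
      have e0 : 1 / B + ξ = (1 + ξ * B) / B := by
        rw [add_div, mul_div_assoc, div_self hB0, mul_one]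
      have e1 : (1 / B) * (1 / B + ξ) = (1 + ξ * B) / B ^ 2 := by
        rw [e0, div_mul_div_comm, one_mul, ← pow_two]
      rw [e1, h1, hBsq, eq_div_iff (mul_ne_zero (pow_ne_zero 2 ht0') (pow_ne_zero 2 hden))]
      field_simp
    calc (1 - 3 * t ^ 2) * (((1 - t ^ 2 + 3 * t ^ 4)⁻¹) ^ 2)
        = (1 / B) * (1 / B + ξ) := heqLo
      _ ≤ e * (e + ξ) := key
      _ = ξ * e + e ^ 2 := by ring
  · -- upper bound eventually
    filter_upwards [eventually_le_atBot (-2 : ℝ)] with ξ hξ2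
    have hξ : ξ < 0 := lt_of_le_of_lt hξ2 (by norm_num)
    have hξ0 : ξ ≠ 0 := ne_of_lt hξ
    set t : ℝ := ξ⁻¹ with ht
    have hξt : ξ * t = 1 := mul_inv_cancel₀ hξ0
    have ht0 : t < 0 := inv_neg''.mpr hξ
    have htge : -(1/2 : ℝ) ≤ t := by nlinarith
    have htsq : t ^ 2 ≤ 1/4 := by nlinarith
    set A : ℝ := -(t - t ^ 3) with hA
    set B : ℝ := -(t - t ^ 3 + 3 * t ^ 5) with hB
    have hApos : 0 < A := by nlinarith
    have hBpos : 0 < B := by nlinarith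
    have hp := phi_pos ξ
    have hCl : stdNormalPDF ξ * A ≤ stdNormalCDF ξ := by
      have := le_cdf hξ; rw [hA]; nlinarith
    have hCu : stdNormalCDF ξ ≤ stdNormalPDF ξ * B := by
      have := cdf_le hξ; rw [hB]; nlinarith
    have hCpos : 0 < stdNormalCDF ξ := lt_of_lt_of_le (by positivity) hCl
    set e : ℝ := stdNormalPDF ξ / stdNormalCDF ξ with he
    have hepos : 0 < e := div_pos hp hCpos
    have helb : 1 / B ≤ e := by
      rw [he, div_le_div_iff₀ hBpos hCpos]; nlinarith
    have heub : e ≤ 1 / A := by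
      rw [he, div_le_div_iff₀ hCpos hApos]; nlinarith
    have hBineq : 0 ≤ 1 / B + ξ := by
      have hB0 : B ≠ 0 := ne_of_gt hBpos
      have h1 : 1 + ξ * B = t ^ 2 - 3 * t ^ 4 := by
        rw [hB]; linear_combination (-(1 - t ^ 2 + 3 * t ^ 4)) * hξt
      have h2 : 0 ≤ t ^ 2 - 3 * t ^ 4 := by nlinarith
      have : 1 / B + ξ = (1 + ξ * B) / B := by
        rw [add_div, mul_div_assoc, div_self hB0, mul_one]
      rw [this, h1]; positivity
    have hexi : 0 ≤ e + ξ := by linarith [helb]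
    have key : e * (e + ξ) ≤ (1 / A) * (1 / A + ξ) := by
      apply mul_le_mul heub (by linarith) hexi (by positivity)
    have heqHi : (1 / A) * (1 / A + ξ) = ((t ^ 2 - 1)⁻¹) ^ 2 := by
      have hden : t ^ 2 - 1 ≠ 0 := by nlinarith
      have hA0 : A ≠ 0 := ne_of_gt hApos
      have h1 : 1 + ξ * A = t ^ 2 := by
        rw [hA]; linear_combination (-(1 - t ^ 2)) * hξt
      have hAsq : A ^ 2 = t ^ 2 * (1 - t ^ 2) ^ 2 := by rw [hA]; ring
      have ht0' : t ≠ 0 := ne_of_lt ht0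
      have e0 : 1 / A + ξ = (1 + ξ * A) / A := by
        rw [add_div, mul_div_assoc, div_self hA0, mul_one]
      have e1 : (1 / A) * (1 / A + ξ) = (1 + ξ * A) / A ^ 2 := by
        rw [e0, div_mul_div_comm, one_mul, ← pow_two]
      have hden2 : (1:ℝ) - t ^ 2 ≠ 0 := fun h => hden (by linarith)
      rw [e1, h1, hAsq, div_eq_iff (mul_ne_zero (pow_ne_zero 2 ht0') (pow_ne_zero 2 hden2))]
      field_simp
      ring
    calc ξ * e + e ^ 2 = e * (e + ξ) := by ring
      _ ≤ (1 / A) * (1 / A + ξ) := key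
      _ = ((t ^ 2 - 1)⁻¹) ^ 2 := heqHi
end
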